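/- For every integer n ≥ 1 and every partition λ of n, τ_n(λ) = τ_n(λ'). Consequently, for every integer r ≥ 0, the sets T_{≥r}(n) and T_{=r}(n) are invariant under conjugation (λ belongs to the set if and only if λ' does), and for every integer r ≥ 1 the shell Sh_r(n) and the core Core_r(n) are invariant under conjugation. -/

import Mathlib

open SimpleGraph

/-- `IsTransfer s t` says that the multiset `t` is obtained from the multiset `s` by an
elementary transfer of one unit: remove one unit from some part `a` of `s` (deleting the
part if it becomes `0`) and add one unit to another part `b` of `s`, or create a new part
equal to `1` (encoded by `b = 0`). -/
def IsTransfer (s t : Multiset ℕ) : Prop :=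
  ∃ a ∈ s, ∃ b, (b ∈ s.erase a ∨ b = 0) ∧
    t = ((s.erase a).erase b + (if a = 1 then 0 else {a - 1})) + {b + 1}

/-- The partition graph `G_n`: vertices are the partitions of `n`, and two distinct
partitions are adjacent iff one is obtained from the other by an elementary transfer. -/
def partitionGraph (n : ℕ) : SimpleGraph (Nat.Partition n) :=
  SimpleGraph.fromRel fun l m => IsTransfer l.parts m.parts

/-- The maximum size of a clique of `G_n` containing the partition `l`. -/
noncomputable def maxCliqueSizeThrough (n : ℕ) (l : Nat.Partition n) : ℕ :=
  sSup {m | ∃ s : Finset (Nat.Partition n),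
    (partitionGraph n).IsClique ↑s ∧ l ∈ s ∧ s.card = m}

/-- The simplicial thickness `τ_n(l)`: `m` where `m + 1` is the maximum size of a clique
of `G_n` containing `l`. -/
noncomputable def tau (n : ℕ) (l : Nat.Partition n) : ℕ := maxCliqueSizeThrough n l - 1

/-- The threshold thick zone `T_{≥ r}(n)`. -/
def TGe (n r : ℕ) : Set (Nat.Partition n) := {l | r ≤ tau n l}

/-- The exact regime `T_{= r}(n)`. -/
def TEq (n r : ℕ) : Set (Nat.Partition n) := {l | tau n l = r}

lemma conjParts_sum_aux (N : ℕ) (s : Multiset ℕ) (h : ∀ p ∈ s, p ≤ N) :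
    ∑ k ∈ Finset.range N, (s.filter fun p => k + 1 ≤ p).card = s.sum := by
  induction s using Multiset.induction_on with
  | empty => simp
  | cons a s ih =>
    have ha : a ≤ N := h a (Multiset.mem_cons_self a s)
    have hs : ∀ p ∈ s, p ≤ N := fun p hp => h p (Multiset.mem_cons_of_mem hp)
    have hstep : ∀ k, ((a ::ₘ s).filter fun p => k + 1 ≤ p).card
        = (s.filter fun p => k + 1 ≤ p).card + (if k + 1 ≤ a then 1 else 0) := by
      intro k
      rw [Multiset.filter_cons]
      split_ifs <;> simp [add_comm]
    rw [Finset.sum_congr rfl fun k _ => hstep k, Finset.sum_add_distrib, ih hs,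
      Multiset.sum_cons]
    have h1 : ∑ k ∈ Finset.range N, (if k + 1 ≤ a then 1 else 0)
        = ((Finset.range N).filter fun k => k + 1 ≤ a).card := by
      rw [Finset.card_filter]
    have hfil : ((Finset.range N).filter fun k => k + 1 ≤ a) = Finset.range a := by
      ext k
      simp only [Finset.mem_filter, Finset.mem_range]
      omega
    rw [h1, hfil, Finset.card_range]
    omega

lemma conjParts_sum (N : ℕ) (s : Multiset ℕ) (h : ∀ p ∈ s, p ≤ N) :
    (((Multiset.range N).map fun k => (s.filter fun p => k + 1 ≤ p).card).sum) = s.sum := by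
  rw [← conjParts_sum_aux N s h, Finset.sum_eq_multiset_sum, Finset.range_val]

/-- The conjugate partition: its `k`-th part is the number of parts of `l` that are `≥ k`. -/
def conj (n : ℕ) (l : Nat.Partition n) : Nat.Partition n :=
  Nat.Partition.ofSums n
    ((Multiset.range n).map fun k => (l.parts.filter fun p => k + 1 ≤ p).card)
    (by
      rw [conjParts_sum n l.parts fun p hp =>
        le_of_le_of_eq (Multiset.le_sum_of_mem hp) l.parts_sum]
      exact l.parts_sum)

/-- The main chain of `G_n`: the partitions `(n-k, 1^k)` for `0 ≤ k ≤ n-1`. -/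
def mainChain (n : ℕ) : Set (Nat.Partition n) :=
  {l | ∃ k ≤ n - 1, l.parts = (n - k) ::ₘ Multiset.replicate k 1}

/-- The left boundary edge of `G_n`: the partitions `(n-k, k)` for `1 ≤ k ≤ ⌊n/2⌋`. -/
def leftEdge (n : ℕ) : Set (Nat.Partition n) :=
  {l | ∃ k, 1 ≤ k ∧ k ≤ n / 2 ∧ l.parts = (n - k) ::ₘ {k}}

/-- The right boundary edge of `G_n`: the partitions `(2^k, 1^{n-2k})` for `1 ≤ k ≤ ⌊n/2⌋`. -/
def rightEdge (n : ℕ) : Set (Nat.Partition n) :=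
  {l | ∃ k, 1 ≤ k ∧ k ≤ n / 2 ∧
    l.parts = Multiset.replicate k 2 + Multiset.replicate (n - 2 * k) 1}

/-- The boundary framework `B_n`. -/
def framework (n : ℕ) : Set (Nat.Partition n) := mainChain n ∪ leftEdge n ∪ rightEdge n

/-- The outer shell `Sh_r(n)`: vertices of connected components of the subgraph of `G_n`
induced on `T_{≥ r}(n)` that meet the boundary framework `B_n`. -/
def Sh (n r : ℕ) : Set (Nat.Partition n) :=
  {l | ∃ h : l ∈ TGe n r, ∃ b : TGe n r, (b : Nat.Partition n) ∈ framework n ∧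
    (SimpleGraph.induce (TGe n r) (partitionGraph n)).Reachable ⟨l, h⟩ b}

/-- The inner core `Core_r(n)`. -/
def Core (n r : ℕ) : Set (Nat.Partition n) := TGe n r \ Sh n r

/-- The maximum simplicial thickness `τ_max(n)`. -/
noncomputable def tauMax (n : ℕ) : ℕ := sSup (Set.range (tau n))

/-- The maximal-thickness locus `M_n`. -/
noncomputable def maxLocus (n : ℕ) : Set (Nat.Partition n) := {l | tau n l = tauMax n}

namespace Stmt7Aux

def F (s : Multiset ℕ) (k : ℕ) : ℕ := (s.filter fun p => k ≤ p).card

lemma F_zero (k : ℕ) : F 0 k = 0 := rfl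

lemma F_cons (a : ℕ) (s : Multiset ℕ) (k : ℕ) :
    F (a ::ₘ s) k = (if k ≤ a then 1 else 0) + F s k := by
  simp [F, Multiset.filter_cons]
  split_ifs <;> simp [add_comm]

lemma F_add (s t : Multiset ℕ) (k : ℕ) : F (s + t) k = F s k + F t k := by
  simp [F, Multiset.filter_add]

lemma F_singleton (a k : ℕ) : F {a} k = if k ≤ a then 1 else 0 := by
  have := F_cons a 0 k
  simpa [F] using this

lemma F_replicate (m a k : ℕ) : F (Multiset.replicate m a) k = if k ≤ a then m else 0 := by
  induction m with
  | zero => simp [F]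
  | succ m ih =>
    rw [Multiset.replicate_succ, F_cons, ih]
    split_ifs <;> omega

lemma F_anti (s : Multiset ℕ) {k k' : ℕ} (h : k ≤ k') : F s k' ≤ F s k :=
  Multiset.card_le_card (Multiset.monotone_filter_right s fun _ h' => le_trans h h')

lemma F_erase {a : ℕ} {s : Multiset ℕ} (h : a ∈ s) (k : ℕ) :
    F (s.erase a) k + (if k ≤ a then 1 else 0) = F s k := by
  conv_rhs => rw [← Multiset.cons_erase h]
  rw [F_cons]
  omega

lemma count_add_F (s : Multiset ℕ) (j : ℕ) :
    s.count j + F s (j + 1) = F s j := by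
  have h := Multiset.filter_add_filter (fun p => j + 1 ≤ p) (fun p => p = j) s
  have h1 : (Multiset.filter (fun p => j + 1 ≤ p ∨ p = j) s) = Multiset.filter (fun p => j ≤ p) s := by
    apply Multiset.filter_congr
    intro x _
    constructor
    · rintro (h | h) <;> omega
    · intro h; omega
  have h2 : (Multiset.filter (fun p => (j + 1 ≤ p) ∧ p = j) s) = 0 := by
    rw [Multiset.filter_eq_nil]
    rintro x _ ⟨h1, h2⟩; omega
  rw [h1, h2, add_zero] at h
  have h3 : s.count j = (Multiset.filter (fun p => p = j) s).card := by
    rw [Multiset.count_eq_card_filter_eq]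
    congr 1
    apply Multiset.filter_congr
    intro x _; exact eq_comm
  rw [h3, F, F, ← Multiset.card_add, add_comm, h]

lemma eq_of_F {s t : Multiset ℕ} (h0s : 0 ∉ s) (h0t : 0 ∉ t)
    (h : ∀ k, 1 ≤ k → F s k = F t k) : s = t := by
  ext j
  rcases Nat.eq_zero_or_pos j with rfl | hj
  · rw [Multiset.count_eq_zero.2 h0s, Multiset.count_eq_zero.2 h0t]
  · have h1 := count_add_F s j
    have h2 := count_add_F t j
    have := h j hj
    have := h (j + 1) (by omega)
    omega

lemma card_le_sum {s : Multiset ℕ} (h : ∀ p ∈ s, 1 ≤ p) : s.card ≤ s.sum := by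
  induction s using Multiset.induction_on with
  | empty => simp
  | cons a s ih =>
    simp only [Multiset.card_cons, Multiset.sum_cons]
    have := h a (Multiset.mem_cons_self a s)
    have := ih fun p hp => h p (Multiset.mem_cons_of_mem hp)
    omega

end Stmt7Aux

namespace Stmt7Aux
variable {n : ℕ}

lemma parts_ne_zero (l : Nat.Partition n) : (0:ℕ) ∉ l.parts :=
  fun h => absurd (l.parts_pos h) (lt_irrefl 0)

lemma part_le (l : Nat.Partition n) {a : ℕ} (h : a ∈ l.parts) : a ≤ n :=
  le_of_le_of_eq (Multiset.le_sum_of_mem h) l.parts_sum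

lemma F_parts_le (l : Nat.Partition n) (k : ℕ) : F l.parts k ≤ n :=
  calc F l.parts k ≤ l.parts.card := Multiset.card_le_card (Multiset.filter_le _ _)
  _ ≤ l.parts.sum := card_le_sum (fun p hp => l.parts_pos hp)
  _ = n := l.parts_sum

lemma F_parts_eq_zero (l : Nat.Partition n) {k : ℕ} (hk : n < k) : F l.parts k = 0 := by
  rw [F, Multiset.card_eq_zero, Multiset.filter_eq_nil]
  intro p hp h
  exact absurd (part_le l hp) (by omega)

lemma conj_parts (l : Nat.Partition n) :
    (conj n l).parts = ((Multiset.range n).map fun k => F l.parts (k+1)).filter (· ≠ 0) := rfl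

lemma F_conj (l : Nat.Partition n) {k : ℕ} (hk : 1 ≤ k) :
    F (conj n l).parts k = ∑ j ∈ Finset.range n, (if k ≤ F l.parts (j+1) then 1 else 0) := by
  rw [conj_parts, F, Multiset.filter_filter]
  have h1 : Multiset.filter (fun a => k ≤ a ∧ a ≠ 0)
      ((Multiset.range n).map fun j => F l.parts (j+1))
      = Multiset.filter (fun a => k ≤ a) ((Multiset.range n).map fun j => F l.parts (j+1)) := by
    apply Multiset.filter_congr
    intro x _
    constructor
    · exact fun h => h.1
    · exact fun h => ⟨h, by omega⟩
  rw [h1, Multiset.filter_map, Multiset.card_map]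
  have h2 : Multiset.range n = (Finset.range n).val := rfl
  rw [h2, ← Finset.filter_val, ← Finset.card_def, Finset.card_filter]
  rfl

end Stmt7Aux

namespace Stmt7Aux

lemma sum_ind (N c : ℕ) (P : ℕ → Prop) [DecidablePred P] (hc : c ≤ N)
    (h : ∀ i < N, (P i ↔ i < c)) :
    (∑ i ∈ Finset.range N, if P i then 1 else 0) = c := by
  rw [← Finset.card_filter]
  have : (Finset.range N).filter P = Finset.range c := by
    ext i
    simp only [Finset.mem_filter, Finset.mem_range]
    constructor
    · rintro ⟨h1, h2⟩; exact (h i h1).1 h2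
    · intro hi; exact ⟨by omega, (h i (by omega)).2 hi⟩
  rw [this, Finset.card_range]

lemma sum_two (f g : ℕ → ℕ) (N p q : ℕ) (hp : p < N) (hq : q < N) (hpq : p ≠ q)
    (h : ∀ i < N, i ≠ p → i ≠ q → f i = g i) :
    (∑ i ∈ Finset.range N, f i) + (g p + g q) = (∑ i ∈ Finset.range N, g i) + (f p + f q) := by
  have hpm : p ∈ Finset.range N := Finset.mem_range.2 hp
  have hqm : q ∈ (Finset.range N).erase p := Finset.mem_erase.2 ⟨Ne.symm hpq, Finset.mem_range.2 hq⟩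
  have key : ∀ u : ℕ → ℕ, (∑ i ∈ Finset.range N, u i)
      = u p + (u q + ∑ i ∈ ((Finset.range N).erase p).erase q, u i) := by
    intro u
    rw [Finset.add_sum_erase _ u hqm, Finset.add_sum_erase _ u hpm]
  rw [key f, key g]
  have : ∑ i ∈ ((Finset.range N).erase p).erase q, f i
      = ∑ i ∈ ((Finset.range N).erase p).erase q, g i := by
    apply Finset.sum_congr rfl
    intro i hi
    have h1 := Finset.mem_erase.1 hi
    have h2 := Finset.mem_erase.1 h1.2
    exact h i (Finset.mem_range.1 h2.2) h2.1 h1.1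
  omega

variable {n : ℕ}

lemma le_F_conj_iff (l : Nat.Partition n) {j k : ℕ} (hj : 1 ≤ j) (hk : 1 ≤ k) :
    k ≤ F (conj n l).parts j ↔ k ≤ n ∧ j ≤ F l.parts k := by
  rw [F_conj l hj, ← Finset.card_filter]
  set A := (Finset.range n).filter (fun i => j ≤ F l.parts (i+1)) with hA
  constructor
  · intro hcard
    have hAn : A.card ≤ n := le_trans (Finset.card_filter_le _ _) (by rw [Finset.card_range])
    refine ⟨le_trans hcard hAn, ?_⟩
    by_contra hlt
    push_neg at hlt
    have hsub : A ⊆ Finset.range (k - 1) := by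
      intro i hi
      rw [hA, Finset.mem_filter] at hi
      rw [Finset.mem_range]
      by_contra hik
      push_neg at hik
      have : F l.parts (i+1) ≤ F l.parts k := F_anti _ (by omega)
      omega
    have := Finset.card_le_card hsub
    rw [Finset.card_range] at this
    omega
  · rintro ⟨hkn, hjF⟩
    have hsub : Finset.range k ⊆ A := by
      intro i hi
      rw [Finset.mem_range] at hi
      rw [hA, Finset.mem_filter, Finset.mem_range]
      exact ⟨by omega, le_trans hjF (F_anti _ (by omega))⟩
    have := Finset.card_le_card hsub
    rw [Finset.card_range] at this
    exact this

lemma conj_parts_eq (l : Nat.Partition n) (t : Multiset ℕ) (h0 : (0:ℕ) ∉ t)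
    (hF : ∀ k, 1 ≤ k →
      (∑ i ∈ Finset.range n, if k ≤ F l.parts (i+1) then 1 else 0) = F t k) :
    (conj n l).parts = t := by
  apply eq_of_F (parts_ne_zero _) h0
  intro k hk
  rw [F_conj l hk, hF k hk]

lemma conj_conj (l : Nat.Partition n) : conj n (conj n l) = l := by
  apply Nat.Partition.ext
  apply conj_parts_eq (conj n l) l.parts (parts_ne_zero l)
  intro k hk
  have hc : (if k ≤ n then F l.parts k else 0) ≤ n := by
    split_ifs
    · exact F_parts_le l k
    · omega
  rw [sum_ind n (if k ≤ n then F l.parts k else 0) _ hc ?_]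
  · split_ifs with h
    · rfl
    · exact (F_parts_eq_zero l (by omega)).symm
  · intro i hi
    rw [le_F_conj_iff l (by omega) hk]
    split_ifs with h2 <;> omega

lemma conj_injective : Function.Injective (conj n) := by
  intro a b h
  rw [← conj_conj a, h, conj_conj]

end Stmt7Aux

namespace Stmt7Aux

lemma F_transfer {s : Multiset ℕ} {a b : ℕ} (h0 : (0:ℕ) ∉ s) (ha : a ∈ s)
    (hb : b ∈ s.erase a ∨ b = 0) (k : ℕ) (hk : 1 ≤ k) :
    F (((s.erase a).erase b + (if a = 1 then 0 else {a - 1})) + {b + 1}) k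
      + (if k = a then 1 else 0)
    = F s k + (if k = b + 1 then 1 else 0) := by
  have ha1 : 1 ≤ a := by
    rcases Nat.eq_zero_or_pos a with rfl | h
    · exact absurd ha h0
    · exact h
  have hea := F_erase ha k
  rcases hb with hb | rfl
  · have hb1 : 1 ≤ b := by
      rcases Nat.eq_zero_or_pos b with rfl | h
      · exact absurd (Multiset.mem_of_mem_erase hb) h0
      · exact h
    have heb := F_erase hb k
    rcases eq_or_ne a 1 with rfl | hane
    · rw [if_pos rfl, F_add, F_add, F_singleton, F_zero]
      split_ifs at hea heb ⊢ <;> omega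
    · rw [if_neg hane, F_add, F_add, F_singleton, F_singleton]
      split_ifs at hea heb ⊢ <;> omega
  · have h0e : (0:ℕ) ∉ s.erase a := fun h => h0 (Multiset.mem_of_mem_erase h)
    rw [Multiset.erase_of_notMem h0e]
    rcases eq_or_ne a 1 with rfl | hane
    · rw [if_pos rfl, F_add, F_add, F_singleton, F_zero]
      split_ifs at hea ⊢ <;> omega
    · rw [if_neg hane, F_add, F_add, F_singleton, F_singleton]
      split_ifs at hea ⊢ <;> omega

variable {n : ℕ}

lemma transfer_eq_of_eq {l m : Nat.Partition n} {a b : ℕ} (ha : a ∈ l.parts)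
    (hb : b ∈ l.parts.erase a ∨ b = 0)
    (ht : m.parts = ((l.parts.erase a).erase b + (if a = 1 then 0 else {a - 1})) + {b + 1})
    (hab : a = b + 1) : l = m := by
  apply Nat.Partition.ext
  apply eq_of_F (parts_ne_zero l) (parts_ne_zero m)
  intro k hk
  have := F_transfer (parts_ne_zero l) ha hb k hk
  rw [← ht, hab] at this
  omega

lemma conj_transfer {l m : Nat.Partition n} (hne : l ≠ m)
    (h : IsTransfer l.parts m.parts) :
    IsTransfer (conj n l).parts (conj n m).parts := by
  obtain ⟨a, ha, b, hb, ht⟩ := h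
  have h0 : (0:ℕ) ∉ l.parts := parts_ne_zero l
  have ha1 : 1 ≤ a := l.parts_pos ha
  have han : a ≤ n := part_le l ha
  have hn1 : 1 ≤ n := le_trans ha1 han
  have hab : a ≠ b + 1 := fun hab => hne (transfer_eq_of_eq ha hb ht hab)
  have hbn : b < n := by
    rcases hb with hb | rfl
    · have hbs := Multiset.mem_of_mem_erase hb
      have hb1 : 1 ≤ b := l.parts_pos hbs
      have hle : ({a, b} : Multiset ℕ) ≤ l.parts := by
        rw [Multiset.insert_eq_cons, ← Multiset.cons_erase ha]
        exact Multiset.cons_le_cons a (Multiset.singleton_le.2 hb)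
      obtain ⟨u, hu⟩ := Multiset.le_iff_exists_add.1 hle
      have hsum : l.parts.sum = a + b + u.sum := by rw [hu]; simp [add_assoc]
      rw [l.parts_sum] at hsum
      omega
    · omega
  have ha'1 : 1 ≤ F l.parts a := by
    rw [F, Nat.succ_le_iff, Multiset.card_pos_iff_exists_mem]
    exact ⟨a, Multiset.mem_filter.2 ⟨ha, le_refl a⟩⟩
  have hFm : ∀ k, 1 ≤ k → F m.parts k + (if k = a then 1 else 0)
      = F l.parts k + (if k = b + 1 then 1 else 0) := by
    intro k hk
    rw [ht]
    exact F_transfer h0 ha hb k hk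
  have ha'mem : F l.parts a ∈ (conj n l).parts := by
    rw [conj_parts]
    refine Multiset.mem_filter.2 ⟨?_, by omega⟩
    refine Multiset.mem_map.2 ⟨a - 1, Multiset.mem_range.2 (by omega), ?_⟩
    rw [Nat.sub_add_cancel ha1]
  have hbor : F l.parts (b+1) ∈ ((conj n l).parts).erase (F l.parts a)
      ∨ F l.parts (b+1) = 0 := by
    rcases Nat.eq_zero_or_pos (F l.parts (b+1)) with hb0 | hb'1
    · exact Or.inr hb0
    · left
      have hcount : 1 + (if F l.parts (b+1) = F l.parts a then 1 else 0)
          ≤ ((conj n l).parts).count (F l.parts (b+1)) := by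
        rw [conj_parts, Multiset.count_filter, if_pos (show F l.parts (b+1) ≠ 0 by omega)]
        have hsplit : Multiset.range n = (a - 1) ::ₘ (Multiset.range n).erase (a - 1) :=
          (Multiset.cons_erase (Multiset.mem_range.2 (by omega))).symm
        rw [hsplit, Multiset.map_cons]
        have hbmem : F l.parts (b+1)
            ∈ ((Multiset.range n).erase (a-1)).map fun j => F l.parts (j+1) := by
          refine Multiset.mem_map.2 ⟨b, ?_, rfl⟩
          exact (Multiset.mem_erase_of_ne (show b ≠ a - 1 by omega)).2
            (Multiset.mem_range.2 hbn)
        have hge := Multiset.one_le_count_iff_mem.2 hbmem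
        simp only [Multiset.count_cons, Nat.sub_add_cancel ha1]
        split_ifs <;> omega
      rcases eq_or_ne (F l.parts (b+1)) (F l.parts a) with he | hne'
      · rw [he, ← Multiset.count_pos, Multiset.count_erase_self]
        rw [he] at hcount
        split_ifs at hcount <;> omega
      · rw [← Multiset.count_pos, Multiset.count_erase_of_ne hne']
        split_ifs at hcount <;> omega
  refine ⟨F l.parts a, ha'mem, F l.parts (b+1), hbor, ?_⟩
  apply eq_of_F (parts_ne_zero (conj n m))
  · intro hmem0
    rcases Multiset.mem_add.1 hmem0 with h1 | h1
    · rcases Multiset.mem_add.1 h1 with h2 | h2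
      · exact parts_ne_zero (conj n l)
          (Multiset.mem_of_mem_erase (Multiset.mem_of_mem_erase h2))
      · split_ifs at h2 with hx
        · exact absurd h2 (Multiset.notMem_zero 0)
        · have := Multiset.mem_singleton.1 h2
          omega
    · have := Multiset.mem_singleton.1 h1
      omega
  · intro k hk
    have hRHS := F_transfer (parts_ne_zero (conj n l)) ha'mem hbor k hk
    have haux1 : F m.parts a + 1 = F l.parts a := by
      have := hFm a (by omega)
      rw [if_pos rfl, if_neg hab] at this
      omega
    have haux2 : F m.parts (b+1) = F l.parts (b+1) + 1 := by
      have := hFm (b+1) (by omega)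
      rw [if_pos rfl, if_neg (fun hx => hab hx.symm)] at this
      omega
    have hLHS : F (conj n m).parts k + (if k = F l.parts a then 1 else 0)
        = F (conj n l).parts k + (if k = F l.parts (b+1) + 1 then 1 else 0) := by
      rw [F_conj m hk, F_conj l hk]
      have h2 := sum_two (fun i => if k ≤ F m.parts (i+1) then 1 else 0)
        (fun i => if k ≤ F l.parts (i+1) then 1 else 0) n (a-1) b (by omega) hbn
        (by omega) ?_
      · rw [Nat.sub_add_cancel ha1] at h2
        split_ifs at h2 ⊢ <;> omega
      · intro i hi hip hiq
        have := hFm (i+1) (by omega)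
        rw [if_neg (by omega), if_neg (by omega)] at this
        rw [show F m.parts (i+1) = F l.parts (i+1) by omega]
    exact Nat.add_right_cancel (hLHS.trans hRHS.symm)

end Stmt7Aux

namespace Stmt7Aux

variable {n : ℕ}

lemma conj_adj {l m : Nat.Partition n} (h : (partitionGraph n).Adj l m) :
    (partitionGraph n).Adj (conj n l) (conj n m) := by
  rw [partitionGraph, SimpleGraph.fromRel_adj] at h ⊢
  obtain ⟨hne, h⟩ := h
  refine ⟨fun he => hne (conj_injective he), ?_⟩
  rcases h with h | h
  · exact Or.inl (conj_transfer hne h)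
  · exact Or.inr (conj_transfer (Ne.symm hne) h)

lemma clique_sub (l : Nat.Partition n) :
    {m | ∃ s : Finset (Nat.Partition n),
      (partitionGraph n).IsClique ↑s ∧ l ∈ s ∧ s.card = m}
    ⊆ {m | ∃ s : Finset (Nat.Partition n),
      (partitionGraph n).IsClique ↑s ∧ conj n l ∈ s ∧ s.card = m} := by
  rintro m ⟨s, hc, hl, rfl⟩
  refine ⟨s.image (conj n), ?_, Finset.mem_image_of_mem _ hl,
    Finset.card_image_of_injective s conj_injective⟩
  rw [Finset.coe_image]
  rintro x ⟨u, hu, rfl⟩ y ⟨v, hv, rfl⟩ hxy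
  have huv : u ≠ v := fun he => hxy (by rw [he])
  exact conj_adj (hc hu hv huv)

lemma maxClique_conj (l : Nat.Partition n) :
    maxCliqueSizeThrough n (conj n l) = maxCliqueSizeThrough n l := by
  rw [maxCliqueSizeThrough, maxCliqueSizeThrough]
  congr 1
  apply subset_antisymm
  · have := clique_sub (conj n l)
    rwa [conj_conj] at this
  · exact clique_sub l

lemma tau_conj (l : Nat.Partition n) : tau n (conj n l) = tau n l := by
  rw [tau, tau, maxClique_conj]

lemma TGe_conj {r : ℕ} {l : Nat.Partition n} : conj n l ∈ TGe n r ↔ l ∈ TGe n r := by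
  simp [TGe, tau_conj]

end Stmt7Aux

namespace Stmt7Aux

variable {n : ℕ}

lemma conj_main {l : Nat.Partition n} {k0 : ℕ} (hn : 1 ≤ n) (hk0 : k0 ≤ n - 1)
    (hparts : l.parts = (n - k0) ::ₘ Multiset.replicate k0 1) :
    (conj n l).parts = (k0 + 1) ::ₘ Multiset.replicate (n - 1 - k0) 1 := by
  apply conj_parts_eq
  · intro h
    rcases Multiset.mem_cons.1 h with h | h
    · omega
    · exact absurd (Multiset.eq_of_mem_replicate h) (by omega)
  · intro k hk1
    rw [sum_ind n (if k ≤ 1 then n - k0 else if k ≤ k0 + 1 then 1 else 0) _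
      (by split_ifs <;> omega) ?_]
    · rw [F_cons, F_replicate]
      split_ifs <;> omega
    · intro i hi
      rw [hparts, F_cons, F_replicate]
      split_ifs <;> omega

lemma conj_left {l : Nat.Partition n} {k0 : ℕ} (h1 : 1 ≤ k0) (h2 : k0 ≤ n / 2)
    (hparts : l.parts = (n - k0) ::ₘ {k0}) :
    (conj n l).parts = Multiset.replicate k0 2 + Multiset.replicate (n - 2 * k0) 1 := by
  apply conj_parts_eq
  · intro h
    rcases Multiset.mem_add.1 h with h | h <;>
      exact absurd (Multiset.eq_of_mem_replicate h) (by omega)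
  · intro k hk1
    rw [sum_ind n (if k ≤ 1 then n - k0 else if k ≤ 2 then k0 else 0) _
      (by split_ifs <;> omega) ?_]
    · rw [F_add, F_replicate, F_replicate]
      split_ifs <;> omega
    · intro i hi
      rw [hparts, F_cons, F_singleton]
      split_ifs <;> omega

lemma conj_right {l : Nat.Partition n} {k0 : ℕ} (h1 : 1 ≤ k0) (h2 : k0 ≤ n / 2)
    (hparts : l.parts = Multiset.replicate k0 2 + Multiset.replicate (n - 2 * k0) 1) :
    (conj n l).parts = (n - k0) ::ₘ {k0} := by
  apply conj_parts_eq
  · intro h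
    rcases Multiset.mem_cons.1 h with h | h
    · omega
    · rw [Multiset.mem_singleton] at h
      omega
  · intro k hk1
    rw [sum_ind n (if k ≤ k0 then 2 else if k ≤ n - k0 then 1 else 0) _
      (by split_ifs <;> omega) ?_]
    · rw [F_cons, F_singleton]
      split_ifs <;> omega
    · intro i hi
      rw [hparts, F_add, F_replicate, F_replicate]
      split_ifs <;> omega

lemma frame_conj (hn : 1 ≤ n) {l : Nat.Partition n} (hl : l ∈ framework n) :
    conj n l ∈ framework n := by
  rcases hl with (⟨k0, hk0, hparts⟩ | ⟨k0, h1, h2, hparts⟩) | ⟨k0, h1, h2, hparts⟩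
  · refine Or.inl (Or.inl ⟨n - 1 - k0, by omega, ?_⟩)
    rw [show n - (n - 1 - k0) = k0 + 1 from by omega]
    exact conj_main hn hk0 hparts
  · exact Or.inr ⟨k0, h1, h2, conj_left h1 h2 hparts⟩
  · exact Or.inl (Or.inr ⟨k0, h1, h2, conj_right h1 h2 hparts⟩)

lemma Sh_mono (hn : 1 ≤ n) (r : ℕ) {l : Nat.Partition n} (h : l ∈ Sh n r) :
    conj n l ∈ Sh n r := by
  obtain ⟨hmem, b, hbf, hreach⟩ := h
  let φ : (SimpleGraph.induce (TGe n r) (partitionGraph n))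
      →g (SimpleGraph.induce (TGe n r) (partitionGraph n)) :=
    ⟨fun x => ⟨conj n x.1, TGe_conj.mpr x.2⟩, fun hadj => conj_adj hadj⟩
  exact ⟨TGe_conj.mpr hmem, φ b, frame_conj hn hbf, hreach.map φ⟩

end Stmt7Aux


open Stmt7Aux

/-- For every `n ≥ 1` and every partition `l` of `n`, `τ_n(l) = τ_n(l')`.
Consequently, for every `r ≥ 0` the sets `T_{≥r}(n)` and `T_{=r}(n)` are invariant under
conjugation, and for every `r ≥ 1` the shell `Sh_r(n)` and the core `Core_r(n)` are
invariant under conjugation. -/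
theorem stmt7 (n : ℕ) (hn : 1 ≤ n) :
    (∀ l : Nat.Partition n, tau n l = tau n (conj n l)) ∧
    (∀ r : ℕ, ∀ l : Nat.Partition n,
      (l ∈ TGe n r ↔ conj n l ∈ TGe n r) ∧ (l ∈ TEq n r ↔ conj n l ∈ TEq n r)) ∧
    (∀ r : ℕ, 1 ≤ r → ∀ l : Nat.Partition n,
      (l ∈ Sh n r ↔ conj n l ∈ Sh n r) ∧ (l ∈ Core n r ↔ conj n l ∈ Core n r)) := by
  have hSh : ∀ r : ℕ, ∀ l : Nat.Partition n, l ∈ Sh n r ↔ conj n l ∈ Sh n r := by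
    intro r l
    constructor
    · exact Sh_mono hn r
    · intro h
      have := Sh_mono hn r h
      rwa [conj_conj] at this
  refine ⟨fun l => (tau_conj l).symm, fun r l => ⟨TGe_conj.symm, ?_⟩, fun r _ l =>
    ⟨hSh r l, ?_⟩⟩
  · simp only [TEq, Set.mem_setOf_eq, tau_conj]
  · simp only [Core, Set.mem_diff]
    rw [← TGe_conj (r := r) (l := l), ← hSh r l]
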